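/- Let 0 < η < 1. Then every complex number λ satisfying (λ−1)³ + 3η(λ−1)² + 2η²(1+η)(λ−1) + 2η³ = 0 has modulus |λ| < √((1 − η + η²)(1 + η − η²)). In particular every eigenvalue of the iteration matrix M = [[1, 0, η], [0, 1−2η, −η], [−η, −η(1−2η), 1−η]] has modulus strictly less than √((1 − η + η²)(1 + η − η²)) < 1. -/

import Mathlib

private lemma wneg (η w : ℝ) (h0 : 0 < η) (h1 : η < 1)
    (hw : w^3 - η^2*(1-2*η)*w + 2*η^3*(1-η) = 0) : w < 0 := by
  by_contra h
  push_neg at h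
  rcases le_or_gt (1/2) η with hc | hc
  · nlinarith [pow_nonneg h 3, mul_nonneg (mul_nonneg (mul_nonneg h0.le h0.le) (by linarith : (0:ℝ) ≤ 2*η-1)) h, mul_pos (mul_pos (mul_pos h0 h0) h0) (by linarith : (0:ℝ) < 1-η)]
  · nlinarith [mul_nonneg (sq_nonneg (w-η)) (by linarith : (0:ℝ) ≤ w+2*η), mul_pos (mul_pos (mul_pos h0 h0) h0) (by linarith : (0:ℝ) < 1-η), pow_nonneg h 3]

private lemma wlb (η w : ℝ) (h0 : 0 < η) (h1 : η < 1)
    (hw : w^3 - η^2*(1-2*η)*w + 2*η^3*(1-η) = 0) : -8*η < 5*w := by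
  by_contra h
  push_neg at h
  nlinarith [mul_nonpos_of_nonpos_of_nonneg (by linarith : 5*w+8*η ≤ 0) (by nlinarith [sq_nonneg (5*w-4*η), sq_nonneg η] : (0:ℝ) ≤ 25*w^2-40*η*w+64*η^2-25*η^2*(1-2*η)), mul_pos (mul_pos (mul_pos h0 h0) h0) (by linarith : (0:ℝ) < 1-η)]

private lemma wub (η w : ℝ) (h0 : 0 < η) (h1 : η < 1)
    (hw : w^3 - η^2*(1-2*η)*w + 2*η^3*(1-η) = 0) : -3*(1-η) < w := by
  by_contra h
  push_neg at h
  nlinarith [mul_nonpos_of_nonpos_of_nonneg (by linarith : w + 3*(1-η) ≤ 0)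
      (by nlinarith [sq_nonneg (2*w - 3*(1-η)), sq_nonneg (1-η), sq_nonneg η, mul_pos h0 h0] :
        (0:ℝ) ≤ w^2 - 3*(1-η)*w + 9*(1-η)^2 - η^2*(1-2*η)),
    mul_pos (mul_pos (mul_pos h0 h0) h0) (by linarith : (0:ℝ) < 1-η),
    mul_pos (mul_pos h0 h0) (by nlinarith [sq_nonneg (16*(1-η)-3/2), mul_nonneg (sq_nonneg (1-η)) h0.le] : (0:ℝ) < 27*(1-η)^2 - 3*η^2 + 4*η^3)]

private lemma keyA (η w : ℝ) (h0 : 0 < η) (h1 : η < 1)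
    (hw : w^3 - η^2*(1-2*η)*w + 2*η^3*(1-η) = 0) :
    w^2 + 2*(1-η)*w - 2*η + η^2 + η^2*(1-η)^2 < 0 := by
  have hwn := wneg η w h0 h1 hw
  have hlb := wlb η w h0 h1 hw
  have hub := wub η w h0 h1 hw
  have h3 : 5*w^2 ≤ 8*η*(-w) := by nlinarith [mul_neg_of_neg_of_pos hwn (by linarith : (0:ℝ) < 5*w + 8*η)]
  rcases le_or_gt η (5/9) with hc | hc
  · nlinarith [h3, mul_pos h0 (by linarith : (0:ℝ) < 1-η), mul_nonneg (by linarith : (0:ℝ) ≤ -w) (by linarith : (0:ℝ) ≤ 10 - 18*η)]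
  · nlinarith [h3, mul_nonneg (by linarith : (0:ℝ) ≤ w + 3*(1-η)) (by linarith : (0:ℝ) ≤ 18*η - 10), mul_pos h0 (by linarith : (0:ℝ) < 1-η), sq_nonneg (1-η)]

private lemma keyB (η w : ℝ) (h0 : 0 < η) (h1 : η < 1)
    (hw : w^3 - η^2*(1-2*η)*w + 2*η^3*(1-η) = 0) :
    w^2 - (1-η)*w - 2*η + η^2 + η^4 < 0 := by
  have hwn := wneg η w h0 h1 hw
  have hlb := wlb η w h0 h1 hw
  by_contra h
  push_neg at h
  have h3 : 5*w^2 ≤ 8*η*(-w) := by nlinarith [mul_neg_of_neg_of_pos hwn (by linarith : (0:ℝ) < 5*w + 8*η)]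
  have h4 : (-w)*(5+3*η) ≥ 5*η*(2-η-η^3) := by nlinarith [h, h3]
  have h5 : (1-η)*w^2 + (2*η-2*η^2+2*η^3-η^4)*w + 2*η^3*(1-η) ≥ 0 := by
    nlinarith [mul_nonneg h (by linarith : (0:ℝ) ≤ -w)]
  have h6 : (-w)*η*(2-2*η+10*η^2-5*η^3) ≤ 10*η^3*(1-η) := by
    nlinarith [mul_nonneg (by linarith : (0:ℝ) ≤ 1-η) (by linarith : 0 ≤ 8*η*(-w) - 5*w^2), h5]
  have hq5 : 0 < η*(2-2*η+10*η^2-5*η^3) := by nlinarith [sq_nonneg η]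
  have hA : (-w)*η*(2-2*η+10*η^2-5*η^3)*(5+3*η) ≥ 5*η*(2-η-η^3)*(η*(2-2*η+10*η^2-5*η^3)) := by
    nlinarith [mul_le_mul_of_nonneg_right h4 hq5.le]
  have hB : (-w)*η*(2-2*η+10*η^2-5*η^3)*(5+3*η) ≤ 10*η^3*(1-η)*(5+3*η) := by
    nlinarith [mul_le_mul_of_nonneg_right h6 (by linarith : (0:ℝ) ≤ 5+3*η)]
  nlinarith [hA, hB, mul_pos (mul_pos h0 h0) (mul_pos h0 (show (0:ℝ) < 1-η by linarith)), sq_nonneg η, mul_pos h0 h0, mul_pos (mul_pos h0 h0) h0]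

private lemma cubic_bound (η : ℝ) (hη0 : 0 < η) (hη1 : η < 1) (lam : ℂ)
    (hlam : (lam - 1) ^ 3 + 3 * (η : ℂ) * (lam - 1) ^ 2
          + 2 * (η : ℂ) ^ 2 * (1 + (η : ℂ)) * (lam - 1) + 2 * (η : ℂ) ^ 3 = 0) :
    ‖lam‖ < Real.sqrt ((1 - η + η ^ 2) * (1 + η - η ^ 2)) := by
  set x := lam.re with hxdef
  set y := lam.im with hydef
  have hre := congrArg Complex.re hlam
  have him := congrArg Complex.im hlam
  simp only [pow_succ, pow_zero, one_mul, Complex.add_re, Complex.add_im, Complex.mul_re,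
    Complex.mul_im, Complex.sub_re, Complex.sub_im, Complex.one_re, Complex.one_im,
    Complex.ofReal_re, Complex.ofReal_im, Complex.zero_re, Complex.zero_im,
    Complex.re_ofNat, Complex.im_ofNat] at hre him
  have hA : (x-1)^3 - 3*(x-1)*y^2 + 3*η*((x-1)^2 - y^2) + 2*η^2*(1+η)*(x-1) + 2*η^3 = 0 := by
    linear_combination hre
  have hB : y * (3*(x-1)^2 - y^2 + 6*η*(x-1) + 2*η^2*(1+η)) = 0 := by
    linear_combination him
  have hlt : x^2 + y^2 < (1 - η + η ^ 2) * (1 + η - η ^ 2) := by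
    rcases eq_or_ne y 0 with hy | hy
    · rw [hy] at hA
      have hw : (x-1+η)^3 - η^2*(1-2*η)*(x-1+η) + 2*η^3*(1-η) = 0 := by
        linear_combination hA
      have := keyA η (x-1+η) hη0 hη1 hw
      rw [hy]
      nlinarith [this]
    · have h2 : 3*(x-1)^2 - y^2 + 6*η*(x-1) + 2*η^2*(1+η) = 0 :=
        (mul_eq_zero.mp hB).resolve_left hy
      have hw : (-2*(x-1+η))^3 - η^2*(1-2*η)*(-2*(x-1+η)) + 2*η^3*(1-η) = 0 := by
        linear_combination hA - (3*(x-1) + 3*η) * h2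
      have := keyB η (-2*(x-1+η)) hη0 hη1 hw
      nlinarith [this, h2]
  rw [Complex.norm_def, Complex.normSq_apply]
  have : lam.re * lam.re + lam.im * lam.im = x^2 + y^2 := by rw [← hxdef, ← hydef]; ring
  rw [this]
  exact Real.sqrt_lt_sqrt (by positivity) hlt

/-- For `0 < η < 1`, every complex root `λ` of the characteristic cubic
`(λ−1)³ + 3η(λ−1)² + 2η²(1+η)(λ−1) + 2η³ = 0` satisfies
`|λ| < √((1 − η + η²)(1 + η − η²))`; in particular every eigenvalue of the iteration
matrix `M` has modulus strictly less than this bound, which is `< 1`. -/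
theorem stmt2 (η : ℝ) (hη0 : 0 < η) (hη1 : η < 1)
    (M : Matrix (Fin 3) (Fin 3) ℂ)
    (hM : M = !![(1 : ℂ), 0, (η : ℂ);
                 0, 1 - 2 * (η : ℂ), -(η : ℂ);
                 -(η : ℂ), -(η : ℂ) * (1 - 2 * (η : ℂ)), 1 - (η : ℂ)]) :
    (∀ lam : ℂ,
      (lam - 1) ^ 3 + 3 * (η : ℂ) * (lam - 1) ^ 2
          + 2 * (η : ℂ) ^ 2 * (1 + (η : ℂ)) * (lam - 1) + 2 * (η : ℂ) ^ 3 = 0 →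
        ‖lam‖ < Real.sqrt ((1 - η + η ^ 2) * (1 + η - η ^ 2))) ∧
    (∀ lam : ℂ,
      Module.End.HasEigenvalue (Matrix.toLin' M) lam →
        ‖lam‖ < Real.sqrt ((1 - η + η ^ 2) * (1 + η - η ^ 2))) ∧
    Real.sqrt ((1 - η + η ^ 2) * (1 + η - η ^ 2)) < 1 := by
  refine ⟨fun lam hlam => cubic_bound η hη0 hη1 lam hlam, fun lam h => ?_, ?_⟩
  · apply cubic_bound η hη0 hη1 lam
    obtain ⟨v, hv⟩ := h.exists_hasEigenvector
    have hmv : M.mulVec v = lam • v := by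
      have := hv.apply_eq_smul
      simpa [Matrix.toLin'_apply] using this
    have hker : (lam • (1 : Matrix (Fin 3) (Fin 3) ℂ) - M).mulVec v = 0 := by
      rw [Matrix.sub_mulVec, Matrix.smul_mulVec, Matrix.one_mulVec, hmv, sub_self]
    have hdet : (lam • (1 : Matrix (Fin 3) (Fin 3) ℂ) - M).det = 0 := by
      rw [← Matrix.exists_mulVec_eq_zero_iff]
      exact ⟨v, hv.2, hker⟩
    have hmat : lam • (1 : Matrix (Fin 3) (Fin 3) ℂ) - M =
        !![lam - 1, 0, -(η:ℂ); 0, lam - (1 - 2*(η:ℂ)), (η:ℂ);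
           (η:ℂ), (η:ℂ)*(1 - 2*(η:ℂ)), lam - (1 - (η:ℂ))] := by
      subst hM
      ext i j
      fin_cases i <;> fin_cases j <;>
        simp [Matrix.one_apply, Matrix.sub_apply, Matrix.smul_apply, smul_eq_mul]
    rw [hmat] at hdet
    simp [Matrix.det_fin_three] at hdet
    linear_combination hdet
  · have h1 : (1 - η + η ^ 2) * (1 + η - η ^ 2) < 1 := by
      nlinarith [mul_pos hη0 (by linarith : (0:ℝ) < 1 - η)]
    calc Real.sqrt ((1 - η + η ^ 2) * (1 + η - η ^ 2)) < Real.sqrt 1 :=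
          Real.sqrt_lt_sqrt (mul_nonneg (by nlinarith [sq_nonneg (2*η-1)]) (by nlinarith [mul_pos hη0 (show (0:ℝ) < 1-η by linarith)])) h1
      _ = 1 := Real.sqrt_one
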